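/- arXiv:0706.1575 — 3 statements merged into one kernel-verified Lean document; each statement's English description precedes it below -/
import Mathlib

section
/- With respect to the Fischer-type inner product on F^n_d, the subspace U^n_d = {theta(xi)*xi : theta in P^n_{d-1}} and the divergence-free subspace V^n_d are orthogonal complements: F^n_d = V^n_d ⊕ U^n_d with V^n_d ⟂ U^n_d. -/
open MvPolynomial Matrix

noncomputable def Pnd (n d : ℕ) : Submodule ℝ (MvPolynomial (Fin n) ℝ) :=
  homogeneousSubmodule (Fin n) ℝ d

noncomputable def Fnd (n d : ℕ) : Submodule ℝ (Fin n → MvPolynomial (Fin n) ℝ) :=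
  Submodule.pi Set.univ fun _ => homogeneousSubmodule (Fin n) ℝ d

noncomputable def divL (n : ℕ) : (Fin n → MvPolynomial (Fin n) ℝ) →ₗ[ℝ] MvPolynomial (Fin n) ℝ :=
  ∑ i, (pderiv i).toLinearMap ∘ₗ LinearMap.proj i

noncomputable def adL {n : ℕ} (N : Matrix (Fin n) (Fin n) ℝ) :
    (Fin n → MvPolynomial (Fin n) ℝ) →ₗ[ℝ] (Fin n → MvPolynomial (Fin n) ℝ) :=
  LinearMap.pi fun i =>
    (∑ j, (LinearMap.mulLeft ℝ (∑ k, N j k • (X k : MvPolynomial (Fin n) ℝ))) ∘ₗ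
        (pderiv j).toLinearMap ∘ₗ LinearMap.proj i)
      - ∑ j, N i j • LinearMap.proj j

noncomputable def diffOp {n : ℕ} (m : Fin n →₀ ℕ) :
    Module.End ℝ (MvPolynomial (Fin n) ℝ) :=
  (List.finRange n).foldr
    (fun i f => (((pderiv i).toLinearMap : Module.End ℝ (MvPolynomial (Fin n) ℝ)) ^ (m i)) * f) 1

/-- Fischer inner product `⟨p,q⟩ = p(∂_ξ) q(ξ) |_{ξ=0}`. -/
noncomputable def fischer {n : ℕ} (p q : MvPolynomial (Fin n) ℝ) : ℝ :=
  constantCoeff ((AddMonoidAlgebra.coeff p).sum fun m c => c • (diffOp m q))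

noncomputable def fischerV {n : ℕ} (p q : Fin n → MvPolynomial (Fin n) ℝ) : ℝ :=
  ∑ i, fischer (p i) (q i)

noncomputable def radialL (n : ℕ) : MvPolynomial (Fin n) ℝ →ₗ[ℝ] (Fin n → MvPolynomial (Fin n) ℝ) :=
  LinearMap.pi fun i => LinearMap.mulLeft ℝ (X i)

noncomputable def Und (n d : ℕ) : Submodule ℝ (Fin n → MvPolynomial (Fin n) ℝ) :=
  Submodule.map (radialL n) (Pnd n (d - 1))

def N3 : Matrix (Fin 3) (Fin 3) ℝ := !![0,1,0; 0,0,1; 0,0,0]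


namespace FischerAux

open MvPolynomial Finsupp

variable {n : ℕ}

theorem pderiv_pderiv_comm (i j : Fin n) (p : MvPolynomial (Fin n) ℝ) :
    pderiv i (pderiv j p) = pderiv j (pderiv i p) := by
  induction p using MvPolynomial.induction_on' with
  | add p q hp hq => simp [hp, hq]
  | monomial m c =>
    rcases eq_or_ne i j with rfl | hij
    · rfl
    · simp only [pderiv_monomial]
      rw [tsub_right_comm]
      congr 1
      rw [Finsupp.tsub_apply, Finsupp.tsub_apply, Finsupp.single_eq_of_ne hij,
        Finsupp.single_eq_of_ne (Ne.symm hij)]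
      simp only [tsub_zero]; ring

noncomputable def EE (i : Fin n) : Module.End ℝ (MvPolynomial (Fin n) ℝ) :=
  (pderiv i).toLinearMap

theorem EE_comm (i j : Fin n) : Commute (EE i) (EE j) := by
  apply LinearMap.ext
  intro p
  exact pderiv_pderiv_comm i j p

theorem commute_foldr (e : Fin n → ℕ) (i : Fin n) (L : List (Fin n)) :
    Commute (EE i) (L.foldr (fun j f => EE j ^ (e j) * f) 1) := by
  induction L with
  | nil => exact Commute.one_right _
  | cons a L ih => exact (((EE_comm i a).pow_right _).mul_right ih)

theorem foldr_add_single (e e' : Fin n → ℕ) (i : Fin n)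
    (he : ∀ j, e' j = e j + if j = i then 1 else 0) (L : List (Fin n)) :
    L.foldr (fun j f => EE j ^ (e' j) * f) 1
      = L.foldr (fun j f => EE j ^ (e j) * f) 1 * EE i ^ (L.count i) := by
  induction L with
  | nil => simp
  | cons a L ih =>
    simp only [List.foldr_cons, ih]
    rcases eq_or_ne a i with rfl | h
    · have hc := (commute_foldr e a L).eq
      rw [List.count_cons_self, he a, if_pos rfl]
      rw [pow_succ, pow_succ]
      set G := L.foldr (fun j f => EE j ^ (e j) * f) 1
      calc EE a ^ e a * EE a * (G * EE a ^ L.count a)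
          = EE a ^ e a * ((EE a * G) * EE a ^ L.count a) := by rw [mul_assoc, mul_assoc]
        _ = EE a ^ e a * (G * (EE a * EE a ^ L.count a)) := by rw [hc, mul_assoc]
        _ = EE a ^ e a * (G * (EE a ^ L.count a * EE a)) := by
              rw [← pow_succ', pow_succ]
        _ = EE a ^ e a * G * (EE a ^ L.count a * EE a) := by rw [mul_assoc]
    · rw [List.count_cons_of_ne h, he a, if_neg h, add_zero, mul_assoc]

theorem diffOp_add_single (m : Fin n →₀ ℕ) (i : Fin n) :
    diffOp (m + Finsupp.single i 1) = diffOp m * EE i := by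
  have hd : ∀ m' : Fin n →₀ ℕ, diffOp m' =
      (List.finRange n).foldr (fun j f => EE j ^ (m' j) * f) 1 := fun _ => rfl
  rw [hd, hd, foldr_add_single (fun j => m j) _ i
    (fun j => by simp [Finsupp.single_apply, eq_comm]),
    List.count_eq_one_of_mem (List.nodup_finRange n) (List.mem_finRange i), pow_one]

theorem fischer_monomial (m : Fin n →₀ ℕ) (c : ℝ) (q : MvPolynomial (Fin n) ℝ) :
    fischer (monomial m c) q = c * constantCoeff (diffOp m q) := by
  unfold fischer
  rw [sum_monomial_eq (by rw [zero_smul])]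
  rw [smul_eq_C_mul, _root_.map_mul, constantCoeff_C]

theorem fischer_add_left (p p' q : MvPolynomial (Fin n) ℝ) :
    fischer (p + p') q = fischer p q + fischer p' q := by
  unfold fischer
  rw [← map_add, AddMonoidAlgebra.coeff_add, Finsupp.sum_add_index (fun m _ => by rw [zero_smul])
    (fun m _ c c' => add_smul c c' _)]

theorem fischer_add_right (p q q' : MvPolynomial (Fin n) ℝ) :
    fischer p (q + q') = fischer p q + fischer p q' := by
  unfold fischer
  simp [Finsupp.sum, map_add, smul_add, Finset.sum_add_distrib]

theorem fischer_zero_right (p : MvPolynomial (Fin n) ℝ) : fischer p 0 = 0 := by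
  unfold fischer
  simp [Finsupp.sum]

/-- `fischer p` as an additive monoid hom in the second variable. -/
noncomputable def fischerAM (p : MvPolynomial (Fin n) ℝ) : MvPolynomial (Fin n) ℝ →+ ℝ where
  toFun q := fischer p q
  map_zero' := fischer_zero_right p
  map_add' := fischer_add_right p

theorem fischer_X_mul (i : Fin n) (p q : MvPolynomial (Fin n) ℝ) :
    fischer (X i * p) q = fischer p (pderiv i q) := by
  induction p using MvPolynomial.induction_on' with
  | add p p' hp hp' => rw [mul_add, fischer_add_left, fischer_add_left, hp, hp']
  | monomial m c =>
    rw [X, monomial_mul, one_mul, add_comm, fischer_monomial, fischer_monomial,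
      diffOp_add_single]
    rfl

theorem degree_add (a b : Fin n →₀ ℕ) : (a + b).degree = a.degree + b.degree := by
  simp only [Finsupp.degree_eq_weight_one, map_add]

theorem degree_single (i : Fin n) : (Finsupp.single i 1).degree = 1 := by
  simp [Finsupp.degree_eq_weight_one, Finsupp.weight_apply, Finsupp.sum_single_index]

theorem sum_univ_eq_degree (m : Fin n →₀ ℕ) : ∑ i, (m i) = m.degree := by
  rw [Finsupp.degree]
  exact (Finset.sum_subset (Finset.subset_univ _)
    (fun x _ hx => Finsupp.notMem_support_iff.mp hx)).symm

theorem X_mul_pderiv_monomial (i : Fin n) (m : Fin n →₀ ℕ) (c : ℝ) :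
    X i * pderiv i (monomial m c) = monomial m (c * m i) := by
  rw [pderiv_monomial]
  rcases Nat.eq_zero_or_pos (m i) with h0 | h0
  · simp [h0]
  · rw [X, monomial_mul, one_mul, add_tsub_cancel_of_le]
    rwa [Finsupp.single_le_iff]

theorem euler {k : ℕ} {p : MvPolynomial (Fin n) ℝ} (hp : p.IsHomogeneous k) :
    ∑ i, X i * pderiv i p = (k : ℝ) • p := by
  conv_lhs => rw [p.as_sum]
  conv_rhs => rw [p.as_sum]
  rw [Finset.smul_sum]
  simp only [map_sum, Finset.mul_sum]
  rw [Finset.sum_comm]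
  refine Finset.sum_congr rfl fun m hm => ?_
  have hdeg : m.degree = k := by
    rw [Finsupp.degree_eq_weight_one]; exact hp (MvPolynomial.mem_support_iff.mp hm)
  simp only [X_mul_pderiv_monomial]
  rw [← map_sum, ← Finset.mul_sum]
  have : ∑ i, ((m i : ℝ)) = (k : ℝ) := by
    rw [← Nat.cast_sum, sum_univ_eq_degree, hdeg]
  rw [this, smul_monomial, smul_eq_mul, mul_comm]

theorem pderiv_isHomogeneous {k : ℕ} (i : Fin n) {p : MvPolynomial (Fin n) ℝ}
    (hp : p.IsHomogeneous k) : (pderiv i p).IsHomogeneous (k - 1) := by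
  rw [p.as_sum, map_sum]
  refine IsHomogeneous.sum _ _ _ fun m hm => ?_
  have hdeg : m.degree = k := by
    rw [Finsupp.degree_eq_weight_one]; exact hp (MvPolynomial.mem_support_iff.mp hm)
  rw [pderiv_monomial]
  rcases Nat.eq_zero_or_pos (m i) with h0 | h0
  · simp [h0, isHomogeneous_zero]
  · apply isHomogeneous_monomial
    have hle : Finsupp.single i 1 ≤ m := by rwa [Finsupp.single_le_iff]
    have h2 := degree_add (Finsupp.single i 1) (m - Finsupp.single i 1)
    rw [add_tsub_cancel_of_le hle, hdeg, degree_single] at h2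
    omega

theorem divL_apply (v : Fin n → MvPolynomial (Fin n) ℝ) :
    divL n v = ∑ i, pderiv i (v i) := by
  simp [divL]

theorem radialL_apply (θ : MvPolynomial (Fin n) ℝ) (i : Fin n) :
    radialL n θ i = X i * θ := rfl

theorem div_radial {k : ℕ} {θ : MvPolynomial (Fin n) ℝ} (hθ : θ.IsHomogeneous k) :
    divL n (radialL n θ) = ((n + k : ℕ) : ℝ) • θ := by
  rw [divL_apply]
  have h1 : ∀ i : Fin n, pderiv i (radialL n θ i) = θ + X i * pderiv i θ := fun i => by
    rw [radialL_apply, pderiv_mul, pderiv_X_self, one_mul]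
  simp only [h1]
  rw [Finset.sum_add_distrib, euler hθ, Finset.sum_const, Finset.card_univ, Fintype.card_fin,
    ← Nat.cast_smul_eq_nsmul ℝ, ← add_smul, ← Nat.cast_add]

theorem mem_Fnd {d : ℕ} (v : Fin n → MvPolynomial (Fin n) ℝ) :
    v ∈ Fnd n d ↔ ∀ i, (v i).IsHomogeneous d := by
  simp [Fnd, Submodule.mem_pi, mem_homogeneousSubmodule]

end FischerAux

noncomputable def B3 : MvPolynomial (Fin 3) ℝ := 2 * X 0 * X 2 - X 1 ^ 2
theorem Vnd_Und_orthogonal_complements (n d : ℕ) (hd : 1 ≤ d) :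
    (∀ u ∈ Und n d, ∀ v ∈ Fnd n d ⊓ LinearMap.ker (divL n), fischerV u v = 0) ∧
    (Fnd n d ⊓ LinearMap.ker (divL n)) ⊔ Und n d = Fnd n d ∧
    (Fnd n d ⊓ LinearMap.ker (divL n)) ⊓ Und n d = ⊥ := by
  open FischerAux in
  have part1 : ∀ u ∈ Und n d, ∀ v ∈ Fnd n d ⊓ LinearMap.ker (divL n), fischerV u v = 0 := by
    intro u hu v hv
    obtain ⟨θ, hθ, rfl⟩ := Submodule.mem_map.mp hu
    have hker : divL n v = 0 := LinearMap.mem_ker.mp (Submodule.mem_inf.mp hv).2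
    calc fischerV (radialL n θ) v = ∑ i, fischer θ (pderiv i (v i)) := by
            unfold fischerV
            refine Finset.sum_congr rfl fun i _ => ?_
            rw [radialL_apply, fischer_X_mul]
      _ = fischer θ (∑ i, pderiv i (v i)) := (map_sum (fischerAM θ) _ _).symm
      _ = fischer θ (divL n v) := by rw [divL_apply]
      _ = 0 := by rw [hker]; exact fischer_zero_right θ
  refine ⟨part1, ?_, ?_⟩
  all_goals rcases Nat.eq_zero_or_pos n with rfl | hn
  -- sup, n = 0
  · have hz : ∀ x : Fin 0 → MvPolynomial (Fin 0) ℝ, x = 0 := fun x => funext fun i => i.elim0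
    apply le_antisymm
    · intro x _
      rw [hz x]; exact Submodule.zero_mem _
    · intro x _
      rw [hz x]; exact Submodule.zero_mem _
  -- sup, n ≥ 1
  · have hUF : Und n d ≤ Fnd n d := by
      rintro u hu
      obtain ⟨θ, hθ, rfl⟩ := Submodule.mem_map.mp hu
      have hθh : θ.IsHomogeneous (d - 1) := (mem_homogeneousSubmodule _ _).mp hθ
      rw [mem_Fnd]
      intro i
      have := (isHomogeneous_X ℝ i).mul hθh
      rwa [show 1 + (d - 1) = d by omega] at this
    apply le_antisymm
    · exact sup_le inf_le_left hUF
    · intro v hv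
      set k : ℕ := n + (d - 1) with hk
      have hk0 : (k : ℝ) ≠ 0 := Nat.cast_ne_zero.mpr (by omega)
      have hdivhom : (divL n v).IsHomogeneous (d - 1) := by
        rw [divL_apply]
        exact IsHomogeneous.sum _ _ _ fun i _ =>
          pderiv_isHomogeneous i ((mem_Fnd v).mp hv i)
      set θ : MvPolynomial (Fin n) ℝ := (k : ℝ)⁻¹ • divL n v with hθdef
      have hθh : θ.IsHomogeneous (d - 1) := by
        have := Submodule.smul_mem (homogeneousSubmodule (Fin n) ℝ (d - 1)) ((k : ℝ)⁻¹)
          ((mem_homogeneousSubmodule _ _).mpr hdivhom)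
        exact (mem_homogeneousSubmodule _ _).mp this
      have hrU : radialL n θ ∈ Und n d :=
        Submodule.mem_map.mpr ⟨θ, (mem_homogeneousSubmodule _ _).mpr hθh, rfl⟩
      have hrF : radialL n θ ∈ Fnd n d := hUF hrU
      have hdr : divL n (radialL n θ) = divL n v := by
        rw [div_radial hθh, hθdef, smul_smul, mul_inv_cancel₀ hk0, one_smul]
      have hw : v - radialL n θ ∈ Fnd n d ⊓ LinearMap.ker (divL n) := by
        refine Submodule.mem_inf.mpr ⟨Submodule.sub_mem _ hv hrF, LinearMap.mem_ker.mpr ?_⟩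
        rw [map_sub, hdr, sub_self]
      have hvs : v = (v - radialL n θ) + radialL n θ := by rw [sub_add_cancel]
      rw [hvs]
      exact Submodule.add_mem _ (Submodule.mem_sup_left hw) (Submodule.mem_sup_right hrU)
  -- inf, n = 0
  · have hz : ∀ x : Fin 0 → MvPolynomial (Fin 0) ℝ, x = 0 := fun x => funext fun i => i.elim0
    rw [eq_bot_iff]
    intro x _
    rw [hz x]; exact Submodule.zero_mem _
  -- inf, n ≥ 1
  · rw [eq_bot_iff]
    intro u hu
    obtain ⟨θ, hθ, rfl⟩ := Submodule.mem_map.mp (Submodule.mem_inf.mp hu).2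
    have hθh : θ.IsHomogeneous (d - 1) := (mem_homogeneousSubmodule _ _).mp hθ
    have hker : divL n (radialL n θ) = 0 :=
      LinearMap.mem_ker.mp (Submodule.mem_inf.mp (Submodule.mem_inf.mp hu).1).2
    rw [div_radial hθh] at hker
    have hc0 : ((n + (d - 1) : ℕ) : ℝ) ≠ 0 := Nat.cast_ne_zero.mpr (by omega)
    have hθ0 : θ = 0 := by
      have h2 : θ = ((n + (d - 1) : ℕ) : ℝ)⁻¹ • (((n + (d - 1) : ℕ) : ℝ) • θ) := by
        rw [smul_smul, inv_mul_cancel₀ hc0, one_smul]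
      rw [h2, hker, smul_zero]
    rw [hθ0, map_zero]
    exact Submodule.zero_mem ⊥
end

section
/- Let N be the 2×2 nilpotent Jordan block (N e_1 = 0, N e_2 = e_1). The kernel of ad_{N^*} on F^2_d is exactly the set of vector fields of the form (x φ1(x), y φ1(x) + φ2(x)) with φ1, φ2 polynomials in x alone (of degrees d-1 and d), and this kernel has dimension 2 for every d >= 1. -/
open MvPolynomial Matrix

def N2 : Matrix (Fin 2) (Fin 2) ℝ := !![0,1; 0,0]

/- ### Auxiliary lemmas -/

lemma aux_deg2 (m : Fin 2 →₀ ℕ) : m.degree = m 0 + m 1 := by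
  rw [Finsupp.degree_apply, Finset.sum_subset (Finset.subset_univ _)]
  · exact Fin.sum_univ_two m
  · intro x _ hx; exact Finsupp.notMem_support_iff.1 hx

lemma aux_coeff_pderiv {n : ℕ} (i : Fin n) (m : Fin n →₀ ℕ) (p : MvPolynomial (Fin n) ℝ) :
    coeff m (pderiv i p) = (m i + 1 : ℝ) * coeff (m + Finsupp.single i 1) p := by
  induction p using MvPolynomial.induction_on' with
  | monomial s a =>
    rw [pderiv_monomial, coeff_monomial, coeff_monomial]
    by_cases hsi : s i = 0
    · have h2 : s ≠ m + Finsupp.single i 1 := by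
        intro h
        have := DFunLike.congr_fun h i
        simp [Finsupp.add_apply] at this
        omega
      rw [if_neg h2]
      split_ifs with h3
      · simp [hsi]
      · ring
    · have key : s - Finsupp.single i 1 = m ↔ s = m + Finsupp.single i 1 := by
        constructor
        · intro h
          ext j
          have := DFunLike.congr_fun h j
          simp only [Finsupp.tsub_apply, Finsupp.add_apply, Finsupp.single_apply] at this ⊢
          split_ifs at this ⊢ with hj
          · subst hj; omega
          · omega
        · intro h
          ext j
          have := DFunLike.congr_fun h j
          simp only [Finsupp.tsub_apply, Finsupp.add_apply, Finsupp.single_apply] at this ⊢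
          split_ifs at this ⊢ <;> omega
      split_ifs with h3 h4 h4
      · have : s i = m i + 1 := by
          have := DFunLike.congr_fun h4 i
          simpa using this
        rw [this]; push_cast; ring
      · exact absurd (key.1 h3) h4
      · exact absurd (key.2 h4) h3
      · ring
  | add p q hp hq => simp only [map_add, coeff_add, hp, hq]; ring

lemma aux_sub_add_single (m : Fin 2 →₀ ℕ) (hm1 : 1 ≤ m 1) :
    (m - Finsupp.single 1 1) + Finsupp.single 1 1 = m := by
  ext j
  simp only [Finsupp.add_apply, Finsupp.tsub_apply, Finsupp.single_apply]
  split_ifs with hj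
  · subst hj; omega
  · omega

lemma aux_sub_single_apply (m : Fin 2 →₀ ℕ) :
    (m - Finsupp.single 1 1 : Fin 2 →₀ ℕ) 1 = m 1 - 1 := by
  simp [Finsupp.tsub_apply]

lemma aux_h0_form {d : ℕ} (p : MvPolynomial (Fin 2) ℝ) (hp : p.IsHomogeneous d)
    (hz : pderiv 1 p = 0) :
    p = monomial (Finsupp.single 0 d) (coeff (Finsupp.single 0 d) p) := by
  ext m
  rw [coeff_monomial]
  split_ifs with h
  · rw [h]
  · by_cases hdeg : m.degree = d
    · have hm1 : m 1 ≠ 0 := by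
        intro h1
        apply h
        have h0 : m 0 = d := by have := aux_deg2 m; omega
        ext j; fin_cases j <;> simp_all [Finsupp.single_apply]
      have key := aux_coeff_pderiv 1 (m - Finsupp.single 1 1) p
      rw [hz, aux_sub_add_single m (by omega), coeff_zero] at key
      rcases mul_eq_zero.1 key.symm with hk | hk
      · exact absurd hk (Nat.cast_add_one_ne_zero _)
      · exact hk
    · exact hp.coeff_eq_zero hdeg

lemma aux_h1_form {d : ℕ} (p : MvPolynomial (Fin 2) ℝ) (hp : p.IsHomogeneous d) (c : ℝ)
    (hder : pderiv 1 p = monomial (Finsupp.single 0 (d-1)) c) (hd : 1 ≤ d) :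
    p = monomial (Finsupp.single 0 (d-1) + Finsupp.single 1 1) c
      + monomial (Finsupp.single 0 d) (coeff (Finsupp.single 0 d) p) := by
  ext m
  rw [coeff_add, coeff_monomial, coeff_monomial]
  by_cases hdeg : m.degree = d
  case neg =>
    rw [hp.coeff_eq_zero hdeg, if_neg, if_neg]
    · ring
    · intro h; apply hdeg; rw [← h, aux_deg2]; simp [Finsupp.single_apply]
    · intro h; apply hdeg; rw [← h, aux_deg2]
      simp [Finsupp.add_apply, Finsupp.single_apply]; omega
  case pos =>
  have hsum := aux_deg2 m
  rcases Nat.lt_or_ge (m 1) 1 with hm1 | hm1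
  · have hm : m = Finsupp.single 0 d := by
      ext j; fin_cases j <;> simp_all [Finsupp.single_apply] <;> omega
    rw [if_pos hm.symm, if_neg, hm]
    · ring
    · intro h
      have h1 := DFunLike.congr_fun h 1
      rw [hm] at h1
      simp [Finsupp.add_apply, Finsupp.single_apply] at h1
  · have key := aux_coeff_pderiv 1 (m - Finsupp.single 1 1) p
    rw [hder, aux_sub_add_single m hm1, coeff_monomial] at key
    rcases Nat.lt_or_ge (m 1) 2 with hm2 | hm2
    · have hm1' : m 1 = 1 := by omega
      have heq : m = Finsupp.single 0 (d-1) + Finsupp.single 1 1 := by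
        ext j; fin_cases j <;>
          simp_all [Finsupp.add_apply, Finsupp.single_apply] <;> omega
      have hsing : Finsupp.single 0 (d-1) = m - Finsupp.single 1 1 := by
        ext j; fin_cases j <;>
          simp_all [Finsupp.tsub_apply, Finsupp.single_apply] <;> omega
      rw [if_pos hsing, aux_sub_single_apply, hm1'] at key
      rw [if_pos heq.symm, if_neg]
      · simp only [Nat.cast_ofNat, Nat.sub_self, Nat.cast_zero, zero_add, one_mul] at key
        rw [← key]; ring
      · intro h
        have h1 := DFunLike.congr_fun h 1
        simp [Finsupp.single_apply, hm1'] at h1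
    · have hneq : Finsupp.single 0 (d-1) ≠ m - Finsupp.single 1 1 := by
        intro h
        have h1 := DFunLike.congr_fun h 1
        rw [aux_sub_single_apply] at h1
        simp [Finsupp.single_apply] at h1
        omega
      rw [if_neg hneq] at key
      have hc0 : coeff m p = 0 := by
        rcases mul_eq_zero.1 key.symm with hk | hk
        · exact absurd hk (Nat.cast_add_one_ne_zero _)
        · exact hk
      rw [hc0, if_neg, if_neg]
      · ring
      · intro h
        have h1 := DFunLike.congr_fun h 1
        simp [Finsupp.single_apply] at h1
        omega
      · intro h
        have h1 := DFunLike.congr_fun h 1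
        simp [Finsupp.add_apply, Finsupp.single_apply] at h1
        omega

lemma aux_adL_apply (h : Fin 2 → MvPolynomial (Fin 2) ℝ) (i : Fin 2) :
    adL N2ᵀ h i = X 0 * pderiv 1 (h i) - (if i = 1 then h 0 else 0) := by
  fin_cases i <;>
  simp [adL, N2, Fin.sum_univ_two, LinearMap.mulLeft_apply]

lemma aux_adL_eq_zero_iff (h : Fin 2 → MvPolynomial (Fin 2) ℝ) :
    adL N2ᵀ h = 0 ↔ pderiv 1 (h 0) = 0 ∧ X 0 * pderiv 1 (h 1) = h 0 := by
  rw [funext_iff]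
  constructor
  · intro hz
    have h0 := hz 0
    have h1 := hz 1
    rw [aux_adL_apply] at h0 h1
    simp only [if_neg (by decide : (0:Fin 2) ≠ 1), if_pos rfl, Pi.zero_apply, sub_zero,
      sub_eq_zero] at h0 h1
    refine ⟨?_, h1⟩
    rcases mul_eq_zero.1 h0 with hk | hk
    · exact absurd hk (X_ne_zero 0)
    · exact hk
  · rintro ⟨h0, h1⟩ i
    rw [aux_adL_apply]
    fin_cases i <;> simp [h0, h1]

lemma aux_pd1_aeval (φ : Polynomial ℝ) :
    pderiv 1 (Polynomial.aeval (X 0 : MvPolynomial (Fin 2) ℝ) φ) = 0 := by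
  induction φ using Polynomial.induction_on' with
  | monomial n a =>
    simp [Polynomial.aeval_monomial, pderiv_pow, pderiv_X_of_ne (by decide : (0:Fin 2) ≠ 1),
      pderiv_mul, pderiv_C]
  | add p q hp hq => simp [map_add, hp, hq]

lemma aux_monX (k : ℕ) (a : ℝ) :
    (C a * X 0 ^ k : MvPolynomial (Fin 2) ℝ) = monomial (Finsupp.single 0 k) a := by
  rw [X_pow_eq_monomial, C_mul_monomial, mul_one]

lemma aux_X0_mul_mon (d : ℕ) (hd : 1 ≤ d) (a : ℝ) :
    (X 0 : MvPolynomial (Fin 2) ℝ) * monomial (Finsupp.single 0 (d-1)) a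
      = monomial (Finsupp.single 0 d) a := by
  rw [X, monomial_mul, one_mul, ← Finsupp.single_add, show 1 + (d-1) = d by omega]

lemma aux_X1_mul_mon (k : ℕ) (a : ℝ) :
    (X 1 : MvPolynomial (Fin 2) ℝ) * monomial (Finsupp.single 0 k) a
      = monomial (Finsupp.single 0 k + Finsupp.single 1 1) a := by
  rw [X, monomial_mul, one_mul, add_comm]

lemma aux_aeval_CX (c : ℝ) (k : ℕ) :
    Polynomial.aeval (X 0 : MvPolynomial (Fin 2) ℝ) (Polynomial.C c * Polynomial.X ^ k)
      = monomial (Finsupp.single 0 k) c := by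
  rw [_root_.map_mul, map_pow, Polynomial.aeval_X, Polynomial.aeval_C, ← aux_monX]
  rfl

lemma aux_mon_homog1 (d : ℕ) (a : ℝ) :
    (monomial (Finsupp.single (0 : Fin 2) d) a : MvPolynomial (Fin 2) ℝ).IsHomogeneous d := by
  apply isHomogeneous_monomial
  rw [aux_deg2]; simp [Finsupp.single_apply]

lemma aux_mon_homog2 (d : ℕ) (hd : 1 ≤ d) (a : ℝ) :
    (monomial (Finsupp.single 0 (d-1) + Finsupp.single 1 1) a :
      MvPolynomial (Fin 2) ℝ).IsHomogeneous d := by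
  apply isHomogeneous_monomial
  rw [aux_deg2]; simp [Finsupp.add_apply, Finsupp.single_apply]; omega

noncomputable def aux_v1 (d : ℕ) : Fin 2 → MvPolynomial (Fin 2) ℝ := fun i =>
  if i = 0 then monomial (Finsupp.single 0 d) 1
  else monomial (Finsupp.single 0 (d-1) + Finsupp.single 1 1) 1

noncomputable def aux_v2 (d : ℕ) : Fin 2 → MvPolynomial (Fin 2) ℝ := fun i =>
  if i = 0 then 0 else monomial (Finsupp.single 0 d) 1

@[simp] lemma aux_v1_zero (d : ℕ) : aux_v1 d 0 = monomial (Finsupp.single 0 d) 1 := rfl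
@[simp] lemma aux_v1_one (d : ℕ) :
    aux_v1 d 1 = monomial (Finsupp.single 0 (d-1) + Finsupp.single 1 1) 1 := rfl
@[simp] lemma aux_v2_zero (d : ℕ) : aux_v2 d 0 = 0 := rfl
@[simp] lemma aux_v2_one (d : ℕ) : aux_v2 d 1 = monomial (Finsupp.single 0 d) 1 := rfl

/-- Structure of elements of the kernel intersected with `Fnd 2 d`. -/
lemma aux_struct {d : ℕ} (hd : 1 ≤ d) (h : Fin 2 → MvPolynomial (Fin 2) ℝ)
    (hF : h ∈ Fnd 2 d) (hz : adL N2ᵀ h = 0) :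
    h 0 = monomial (Finsupp.single 0 d) (coeff (Finsupp.single 0 d) (h 0)) ∧
    h 1 = monomial (Finsupp.single 0 (d-1) + Finsupp.single 1 1)
            (coeff (Finsupp.single 0 d) (h 0))
        + monomial (Finsupp.single 0 d) (coeff (Finsupp.single 0 d) (h 1)) := by
  have hh0 : (h 0).IsHomogeneous d := (Submodule.mem_pi.1 hF) 0 (Set.mem_univ _)
  have hh1 : (h 1).IsHomogeneous d := (Submodule.mem_pi.1 hF) 1 (Set.mem_univ _)
  obtain ⟨e0, e1⟩ := (aux_adL_eq_zero_iff h).1 hz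
  have H0 := aux_h0_form (h 0) hh0 e0
  refine ⟨H0, ?_⟩
  have e1' : X 0 * pderiv 1 (h 1)
      = X 0 * monomial (Finsupp.single 0 (d-1)) (coeff (Finsupp.single 0 d) (h 0)) := by
    rw [e1, aux_X0_mul_mon d hd, ← H0]
  exact aux_h1_form (h 1) hh1 _ (mul_left_cancel₀ (X_ne_zero 0) e1') hd

theorem kernel_adNstar_dim2 (d : ℕ) (hd : 1 ≤ d) :
    (∀ h ∈ Fnd 2 d, (adL N2ᵀ h = 0 ↔
      ∃ φ1 φ2 : Polynomial ℝ, φ1.natDegree ≤ d - 1 ∧ φ2.natDegree ≤ d ∧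
        h 0 = X 0 * Polynomial.aeval (X 0 : MvPolynomial (Fin 2) ℝ) φ1 ∧
        h 1 = X 1 * Polynomial.aeval (X 0 : MvPolynomial (Fin 2) ℝ) φ1 +
          Polynomial.aeval (X 0 : MvPolynomial (Fin 2) ℝ) φ2)) ∧
    Module.finrank ℝ ↥(Fnd 2 d ⊓ LinearMap.ker (adL N2ᵀ)) = 2 := by
  constructor
  · intro h hF
    constructor
    · intro hz
      obtain ⟨H0, H1⟩ := aux_struct hd h hF hz
      set c := coeff (Finsupp.single 0 d) (h 0) with hc
      set b := coeff (Finsupp.single 0 d) (h 1) with hb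
      refine ⟨Polynomial.C c * Polynomial.X ^ (d-1), Polynomial.C b * Polynomial.X ^ d,
        Polynomial.natDegree_C_mul_X_pow_le c (d-1), Polynomial.natDegree_C_mul_X_pow_le b d,
        ?_, ?_⟩
      · rw [aux_aeval_CX, aux_X0_mul_mon d hd, H0]
      · rw [aux_aeval_CX, aux_aeval_CX, aux_X1_mul_mon, H1]
    · rintro ⟨φ1, φ2, _, _, H0, H1⟩
      apply (aux_adL_eq_zero_iff h).2
      constructor
      · rw [H0, pderiv_mul, aux_pd1_aeval, pderiv_X_of_ne (by decide : (0:Fin 2) ≠ 1)]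
        ring
      · rw [H1, map_add, pderiv_mul, aux_pd1_aeval, aux_pd1_aeval,
          pderiv_X_self, H0]
        ring
  · -- dimension count
    have Seq : Fnd 2 d ⊓ LinearMap.ker (adL N2ᵀ)
        = Submodule.span ℝ {aux_v1 d, aux_v2 d} := by
      apply le_antisymm
      · rintro h ⟨hF, hK⟩
        obtain ⟨H0, H1⟩ := aux_struct hd h hF (LinearMap.mem_ker.1 hK)
        rw [Submodule.mem_span_pair]
        refine ⟨coeff (Finsupp.single 0 d) (h 0), coeff (Finsupp.single 0 d) (h 1), ?_⟩
        funext i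
        fin_cases i
        · simp only [Pi.add_apply, Pi.smul_apply]
          show _ • aux_v1 d 0 + _ • aux_v2 d 0 = h 0
          simp only [aux_v1_zero, aux_v2_zero, smul_monomial, smul_eq_mul, mul_one,
            smul_zero, add_zero]
          exact H0.symm
        · simp only [Pi.add_apply, Pi.smul_apply]
          show _ • aux_v1 d 1 + _ • aux_v2 d 1 = h 1
          simp only [aux_v1_one, aux_v2_one, smul_monomial, smul_eq_mul, mul_one]
          exact H1.symm
      · rw [Submodule.span_le]
        rintro x (rfl | rfl)
        · constructor
          · refine Submodule.mem_pi.2 fun i _ => ?_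
            fin_cases i
            · exact aux_mon_homog1 d 1
            · exact aux_mon_homog2 d hd 1
          · refine LinearMap.mem_ker.2 ((aux_adL_eq_zero_iff _).2 ⟨?_, ?_⟩)
            · rw [aux_v1_zero, pderiv_monomial]
              simp [Finsupp.single_apply]
            · rw [aux_v1_one, aux_v1_zero, pderiv_monomial]
              have hs : (Finsupp.single 0 (d-1) + Finsupp.single 1 1 : Fin 2 →₀ ℕ)
                  - Finsupp.single 1 1 = Finsupp.single 0 (d-1) := by
                ext j
                simp only [Finsupp.tsub_apply, Finsupp.add_apply]
                omega
              have hv : (Finsupp.single 0 (d-1) + Finsupp.single 1 1 : Fin 2 →₀ ℕ) 1 = 1 := by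
                simp [Finsupp.add_apply, Finsupp.single_apply]
              rw [hs, hv]
              simpa using aux_X0_mul_mon d hd 1
        · constructor
          · refine Submodule.mem_pi.2 fun i _ => ?_
            fin_cases i
            · exact isHomogeneous_zero _ _ _
            · exact aux_mon_homog1 d 1
          · refine LinearMap.mem_ker.2 ((aux_adL_eq_zero_iff _).2 ⟨?_, ?_⟩)
            · rw [aux_v2_zero]; simp
            · rw [aux_v2_one, aux_v2_zero, pderiv_monomial]
              simp [Finsupp.single_apply]
    rw [Seq]
    have hrange : ({aux_v1 d, aux_v2 d} : Set (Fin 2 → MvPolynomial (Fin 2) ℝ))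
        = Set.range ![aux_v1 d, aux_v2 d] := by
      ext z
      simp [Fin.exists_fin_two, eq_comm]
      tauto
    have hli : LinearIndependent ℝ ![aux_v1 d, aux_v2 d] := by
      rw [LinearIndependent.pair_iff]
      intro s t hst
      have h0 := congrFun hst 0
      have h1 := congrFun hst 1
      simp only [Pi.add_apply, Pi.smul_apply, Pi.zero_apply, aux_v1_zero, aux_v1_one,
        aux_v2_zero, aux_v2_one, smul_zero, add_zero, smul_monomial, smul_eq_mul,
        mul_one] at h0 h1
      have hs0 : s = 0 := by
        rw [MvPolynomial.monomial_eq_zero] at h0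
        exact h0
      refine ⟨hs0, ?_⟩
      rw [hs0] at h1
      simp only [MvPolynomial.monomial_zero, zero_add] at h1
      rw [MvPolynomial.monomial_eq_zero] at h1
      exact h1
    rw [hrange, finrank_span_eq_card hli, Fintype.card_fin]
end

section
/- For the 3×3 nilpotent Jordan block N, the intersection of ker(ad_{N^*}) with U^3_d = {theta·xi : theta in P^3_{d-1}} equals {theta(x, 2xz - y^2)·xi : theta polynomial}, and its dimension is ceil(d/2). -/
open MvPolynomial Matrix

/-! ### Auxiliary development -/

noncomputable section AuxKer

open Finsupp

abbrev R3 := MvPolynomial (Fin 3) ℝ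

/-- The derivation `x ∂_y + y ∂_z` as a linear map. -/
noncomputable def DD : R3 →ₗ[ℝ] R3 :=
  (LinearMap.mulLeft ℝ (X 0)).comp (pderiv 1).toLinearMap
    + (LinearMap.mulLeft ℝ (X 1)).comp (pderiv 2).toLinearMap

lemma DD_apply (f : R3) : DD f = X 0 * pderiv 1 f + X 1 * pderiv 2 f := rfl

def mn (a b c : ℕ) : Fin 3 →₀ ℕ :=
  Finsupp.single 0 a + Finsupp.single 1 b + Finsupp.single 2 c

@[simp] lemma mn_apply0 (a b c : ℕ) : mn a b c 0 = a := by
  simp [mn, Finsupp.single_apply]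
@[simp] lemma mn_apply1 (a b c : ℕ) : mn a b c 1 = b := by
  simp [mn, Finsupp.single_apply]
@[simp] lemma mn_apply2 (a b c : ℕ) : mn a b c 2 = c := by
  simp [mn, Finsupp.single_apply]

lemma eq_mn (m : Fin 3 →₀ ℕ) : m = mn (m 0) (m 1) (m 2) := by
  ext i; fin_cases i <;> simp

lemma mn_eq_iff {a b c a' b' c' : ℕ} : mn a b c = mn a' b' c' ↔ a = a' ∧ b = b' ∧ c = c' := by
  constructor
  · intro h
    refine ⟨?_, ?_, ?_⟩
    · simpa using DFunLike.congr_fun h 0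
    · simpa using DFunLike.congr_fun h 1
    · simpa using DFunLike.congr_fun h 2
  · rintro ⟨rfl, rfl, rfl⟩; rfl

lemma coeff_pderiv (i : Fin 3) (m : Fin 3 →₀ ℕ) (f : R3) :
    coeff m (pderiv i f) = (m i + 1) * coeff (m + Finsupp.single i 1) f := by
  induction f using MvPolynomial.induction_on' with
  | monomial s a =>
    rw [pderiv_monomial, coeff_monomial, coeff_monomial]
    by_cases h : s = m + Finsupp.single i 1
    · subst h
      rw [if_pos (by simp), if_pos rfl]
      simp [mul_comm]
    · rw [if_neg h]
      by_cases h2 : s - Finsupp.single i 1 = m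
      · rw [if_pos h2]
        have hsi : s i = 0 := by
          by_contra hne
          apply h
          rw [← h2, tsub_add_cancel_of_le]
          rwa [Finsupp.single_le_iff, Nat.one_le_iff_ne_zero]
        simp [hsi]
      · rw [if_neg h2]; ring
  | add p q hp hq => simp [hp, hq, mul_add]

lemma mn_sub0 (a b c : ℕ) : mn (a+1) b c - Finsupp.single 0 1 = mn a b c := by
  ext i; fin_cases i <;> simp [Finsupp.tsub_apply]
lemma mn_sub1 (a b c : ℕ) : mn a (b+1) c - Finsupp.single 1 1 = mn a b c := by
  ext i; fin_cases i <;> simp [Finsupp.tsub_apply]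
lemma mn_sub2 (a b c : ℕ) : mn a b (c+1) - Finsupp.single 2 1 = mn a b c := by
  ext i; fin_cases i <;> simp [Finsupp.tsub_apply]
lemma mn_add1 (a b c : ℕ) : mn a b c + Finsupp.single 1 1 = mn a (b+1) c := by
  ext i; fin_cases i <;> simp
lemma mn_add2 (a b c : ℕ) : mn a b c + Finsupp.single 2 1 = mn a b (c+1) := by
  ext i; fin_cases i <;> simp

lemma coeff_DD (A B C : ℕ) (θ : R3) :
    coeff (mn A B C) (DD θ)
      = (if A = 0 then 0 else (B+1 : ℝ) * coeff (mn (A-1) (B+1) C) θ)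
        + (if B = 0 then 0 else (C+1 : ℝ) * coeff (mn A (B-1) (C+1)) θ) := by
  rw [DD_apply, coeff_add, coeff_X_mul', coeff_X_mul']
  congr 1
  · rcases A with _ | A
    · rw [if_neg, if_pos rfl]
      simp
    · rw [if_pos, if_neg (Nat.succ_ne_zero A), mn_sub0, coeff_pderiv, mn_add1, mn_apply1]
      · push_cast; ring_nf
      · simp
  · rcases B with _ | B
    · rw [if_neg, if_pos rfl]
      simp
    · rw [if_pos, if_neg (Nat.succ_ne_zero B), mn_sub1, coeff_pderiv, mn_add2, mn_apply2]
      · push_cast; ring_nf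
      · simp

variable {θ : R3}

lemma relA0 (h : DD θ = 0) (b c : ℕ) : coeff (mn 0 b (c+1)) θ = 0 := by
  have h0 := congrArg (coeff (mn 0 (b+1) c)) h
  rw [coeff_DD, coeff_zero, if_pos rfl, if_neg (Nat.succ_ne_zero b), zero_add] at h0
  simp only [Nat.add_sub_cancel] at h0
  have : ((c:ℝ)+1) ≠ 0 := by positivity
  exact (mul_eq_zero.mp h0).resolve_left this

lemma relB1 (h : DD θ = 0) (a c : ℕ) : coeff (mn a 1 c) θ = 0 := by
  have h0 := congrArg (coeff (mn (a+1) 0 c)) h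
  rw [coeff_DD, coeff_zero, if_neg (Nat.succ_ne_zero a), if_pos rfl, add_zero] at h0
  simp only [Nat.add_sub_cancel] at h0
  have h1 : ((0:ℕ):ℝ)+1 ≠ 0 := by norm_num
  field_simp at h0
  simpa using h0

lemma relStep (h : DD θ = 0) (a b c : ℕ) :
    ((b:ℝ)+2) * coeff (mn a (b+2) c) θ + ((c:ℝ)+1) * coeff (mn (a+1) b (c+1)) θ = 0 := by
  have h0 := congrArg (coeff (mn (a+1) (b+1) c)) h
  rw [coeff_DD, coeff_zero, if_neg (Nat.succ_ne_zero a), if_neg (Nat.succ_ne_zero b)] at h0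
  simp only [Nat.add_sub_cancel] at h0
  push_cast at h0 ⊢
  linarith [h0]

lemma inj (h : DD θ = 0) (h0 : ∀ a c, coeff (mn a 0 c) θ = 0) : θ = 0 := by
  have key : ∀ b a c, coeff (mn a b c) θ = 0 := by
    intro b
    induction b using Nat.strong_induction_on with
    | _ b ih =>
      match b with
      | 0 => exact fun a c => h0 a c
      | 1 => exact fun a c => relB1 h a c
      | (b+2) =>
        intro a c
        have hs := relStep h a b c
        rw [ih b (by omega) (a+1) (c+1), mul_zero, add_zero] at hs
        have hb : ((b:ℝ)+2) ≠ 0 := by positivity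
        exact (mul_eq_zero.mp hs).resolve_left hb
  rw [MvPolynomial.eq_zero_iff]
  intro m
  rw [eq_mn m]
  exact key (m 1) (m 0) (m 2)

lemma zdeg (h : DD θ = 0) : ∀ a b c, a < c → coeff (mn a b c) θ = 0 := by
  intro a
  induction a with
  | zero =>
    intro b c hc
    rcases c with _ | c
    · omega
    · exact relA0 h b c
  | succ a ih =>
    intro b c hc
    rcases c with _ | c
    · omega
    · have hs := relStep h a b c
      rw [ih (b+2) c (by omega), mul_zero, zero_add] at hs
      have hc1 : ((c:ℝ)+1) ≠ 0 := by positivity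
      exact (mul_eq_zero.mp hs).resolve_left hc1

lemma DD_mul (f g : R3) : DD (f * g) = DD f * g + f * DD g := by
  simp only [DD_apply, pderiv_mul]
  ring

lemma DD_B3 : DD B3 = 0 := by
  have h2C : (2 : R3) = MvPolynomial.C (2:ℝ) := (map_ofNat MvPolynomial.C 2).symm
  have h1 : pderiv 1 B3 = -(2 * X 1) := by
    rw [B3, h2C]
    simp [pderiv_mul, pderiv_C]
    ring_nf
    exact h2C
  have h2 : pderiv 2 B3 = 2 * X 0 := by
    rw [B3, h2C]
    simp [pderiv_mul, pderiv_C]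
  rw [DD_apply, h1, h2]
  ring

lemma DD_pow (f : R3) (hf : DD f = 0) (q : ℕ) : DD (f ^ q) = 0 := by
  induction q with
  | zero =>
    simp [DD_apply]
  | succ q ih =>
    rw [pow_succ, DD_mul, ih, hf, mul_zero, zero_mul, add_zero]

lemma DD_X0 : DD (X 0 : R3) = 0 := by
  simp [DD_apply]

lemma DD_X0_pow_mul_B3_pow (p q : ℕ) : DD ((X 0 : R3) ^ p * B3 ^ q) = 0 := by
  rw [DD_mul, DD_pow _ DD_X0, DD_pow _ DD_B3]
  simp

lemma coeff_B3_pow (q a c : ℕ) :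
    coeff (mn a 0 c) (B3 ^ q) = if a = q ∧ c = q then 2 ^ q else 0 := by
  induction q generalizing a c with
  | zero =>
    rw [pow_zero]
    have h1 : coeff (mn a 0 c) (1 : R3) = if (0 : Fin 3 →₀ ℕ) = mn a 0 c then 1 else 0 :=
      coeff_one _
    rw [h1]
    by_cases h : a = 0 ∧ c = 0
    · obtain ⟨rfl, rfl⟩ := h
      rw [if_pos, if_pos ⟨rfl, rfl⟩]
      · norm_num
      · ext i; fin_cases i <;> simp
    · rw [if_neg, if_neg h]
      intro he
      apply h
      constructor
      · simpa using (DFunLike.congr_fun he 0).symm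
      · simpa using (DFunLike.congr_fun he 2).symm
  | succ q ih =>
    have hre : B3 ^ (q+1) = MvPolynomial.C (2:ℝ) * (B3 ^ q * X 0 * X 2) - (B3 ^ q * X 1) * X 1 := by
      rw [pow_succ, B3]
      rw [(map_ofNat MvPolynomial.C 2).symm]; ring
    rw [hre, coeff_sub, coeff_C_mul]
    have hX1 : coeff (mn a 0 c) (B3 ^ q * X 1 * X 1) = 0 := by
      rw [coeff_mul_X', if_neg (by simp)]
    rw [hX1, sub_zero, coeff_mul_X']
    rcases c with _ | c
    · rw [if_neg (by simp), mul_zero, if_neg (by omega)]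
    · rw [if_pos (by simp), mn_sub2, coeff_mul_X']
      rcases a with _ | a
      · rw [if_neg (by simp), mul_zero, if_neg (by omega)]
      · rw [if_pos (by simp), mn_sub0, ih]
        by_cases h : a = q ∧ c = q
        · rw [if_pos h, if_pos (by omega)]
          ring
        · rw [if_neg h, if_neg (by omega), mul_zero]

lemma mn_sub0p (a b c p : ℕ) : mn a b c - Finsupp.single 0 p = mn (a - p) b c := by
  ext i; fin_cases i <;> simp [Finsupp.tsub_apply]

lemma coeff_X0_pow_mul_B3_pow (p q a c : ℕ) :
    coeff (mn a 0 c) ((X 0 : R3) ^ p * B3 ^ q) = if a = p + q ∧ c = q then 2 ^ q else 0 := by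
  rw [X_pow_eq_monomial, coeff_monomial_mul']
  by_cases hp : Finsupp.single 0 p ≤ mn a 0 c
  · have hpa : p ≤ a := by
      have := Finsupp.single_le_iff.mp hp
      simpa using this
    rw [if_pos hp, mn_sub0p, one_mul, coeff_B3_pow]
    by_cases h : a - p = q ∧ c = q
    · rw [if_pos h, if_pos (by omega)]
    · rw [if_neg h, if_neg (by omega)]
  · have hpa : ¬ p ≤ a := by
      intro hle
      exact hp (Finsupp.single_le_iff.mpr (by simpa using hle))
    rw [if_neg hp, if_neg (by omega)]

lemma recon (h : DD θ = 0) :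
    θ = ∑ m ∈ θ.support.filter (fun m => m 1 = 0),
        (coeff m θ / 2 ^ (m 2)) • ((X 0 : R3) ^ (m 0 - m 2) * B3 ^ (m 2)) := by
  set φ := ∑ m ∈ θ.support.filter (fun m => m 1 = 0),
      (coeff m θ / 2 ^ (m 2)) • ((X 0 : R3) ^ (m 0 - m 2) * B3 ^ (m 2)) with hφ
  have hφD : DD φ = 0 := by
    rw [hφ, map_sum]
    apply Finset.sum_eq_zero
    intro m _
    rw [LinearMap.map_smul, DD_X0_pow_mul_B3_pow, smul_zero]
  have hco : ∀ a c, coeff (mn a 0 c) φ = coeff (mn a 0 c) θ := by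
    intro a c
    rw [hφ, coeff_sum]
    have hterm : ∀ m ∈ θ.support.filter (fun m => m 1 = 0),
        coeff (mn a 0 c) ((coeff m θ / 2 ^ (m 2)) • ((X 0 : R3) ^ (m 0 - m 2) * B3 ^ (m 2)))
          = if m = mn a 0 c then coeff m θ else 0 := by
      intro m hm
      rw [Finset.mem_filter, MvPolynomial.mem_support_iff] at hm
      obtain ⟨hm0, hm1⟩ := hm
      have hle : m 2 ≤ m 0 := by
        by_contra hlt
        apply hm0
        rw [eq_mn m]
        exact zdeg h _ _ _ (by omega)
      rw [coeff_smul, coeff_X0_pow_mul_B3_pow, smul_eq_mul]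
      by_cases hcase : a = m 0 ∧ c = m 2
      · rw [if_pos (by omega), if_pos]
        · rw [div_mul_cancel₀]
          positivity
        · rw [eq_mn m, hm1]
          exact (mn_eq_iff.mpr (by omega)).symm
      · rw [if_neg (by omega), mul_zero, if_neg]
        intro he
        subst he
        simp at hcase
    rw [Finset.sum_congr rfl hterm, Finset.sum_ite_eq']
    by_cases hmem : mn a 0 c ∈ θ.support.filter (fun m => m 1 = 0)
    · rw [if_pos hmem]
    · rw [if_neg hmem]
      rw [Finset.mem_filter] at hmem
      have : mn a 0 c ∉ θ.support := fun hs => hmem ⟨hs, by simp⟩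
      rw [MvPolynomial.notMem_support_iff] at this
      rw [this]
  have hzero : θ - φ = 0 := by
    apply inj
    · rw [map_sub, h, hφD, sub_zero]
    · intro a c
      rw [coeff_sub, hco, sub_self]
  exact sub_eq_zero.mp hzero

lemma adL_apply3 (u : Fin 3 → R3) (i : Fin 3) :
    adL N3ᵀ u i = X 0 * pderiv 1 (u i) + X 1 * pderiv 2 (u i)
      - (N3ᵀ i 0 • u 0 + N3ᵀ i 1 • u 1 + N3ᵀ i 2 • u 2) := by
  simp only [adL, LinearMap.pi_apply, LinearMap.sub_apply, LinearMap.sum_apply,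
    LinearMap.comp_apply, LinearMap.mulLeft_apply, LinearMap.proj_apply, LinearMap.smul_apply,
    Fin.sum_univ_three]
  simp [N3, transpose_apply, Matrix.vecHead, Matrix.vecTail, Function.comp]

lemma adL_radial (θ : R3) : adL N3ᵀ (radialL 3 θ) = fun i => X i * DD θ := by
  have hrad : ∀ i : Fin 3, radialL 3 θ i = X i * θ := fun i => rfl
  funext i
  rw [adL_apply3, hrad, hrad, hrad, hrad]
  show _ = X i * (X 0 * pderiv 1 θ + X 1 * pderiv 2 θ)
  fin_cases i <;>
    · simp [N3, transpose_apply, Matrix.vecHead, Matrix.vecTail, pderiv_mul, pderiv_X,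
        Pi.single_apply]
      ring

lemma adL_radial_eq_zero_iff (θ : R3) : adL N3ᵀ (radialL 3 θ) = 0 ↔ DD θ = 0 := by
  rw [adL_radial]
  constructor
  · intro h
    have h0 := congrFun h 0
    simp only [Pi.zero_apply] at h0
    rcases mul_eq_zero.mp h0 with h1 | h1
    · exact absurd h1 (MvPolynomial.X_ne_zero 0)
    · exact h1
  · intro h
    funext i
    rw [h, mul_zero, Pi.zero_apply]

lemma DD_aeval (Θ : MvPolynomial (Fin 2) ℝ) : DD (aeval ![X 0, B3] Θ) = 0 := by
  induction Θ using MvPolynomial.induction_on with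
  | C a => rw [aeval_C]; simp [DD_apply, MvPolynomial.algebraMap_eq, pderiv_C]
  | add p q hp hq => rw [map_add, map_add, hp, hq, add_zero]
  | mul_X p i hp =>
    rw [_root_.map_mul, DD_mul, hp, zero_mul, zero_add, aeval_X]
    fin_cases i
    · show (aeval ![X 0, B3]) p * DD (X 0) = 0
      rw [DD_X0, mul_zero]
    · show (aeval ![X 0, B3]) p * DD B3 = 0
      rw [DD_B3, mul_zero]

lemma mem_support_homog {n : ℕ} (hθ : θ.IsHomogeneous n) {m : Fin 3 →₀ ℕ}
    (hm : coeff m θ ≠ 0) : m 0 + m 1 + m 2 = n := by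
  have hw := hθ hm
  rw [Finsupp.weight_apply, Finsupp.sum_fintype, Fin.sum_univ_three] at hw
  · simpa using hw
  · intro i; simp

lemma B3_isHomogeneous : B3.IsHomogeneous 2 := by
  have h2C : (2 : R3) = MvPolynomial.C (2:ℝ) := (map_ofNat MvPolynomial.C 2).symm
  rw [← mem_homogeneousSubmodule]
  apply Submodule.sub_mem
  · rw [mem_homogeneousSubmodule, h2C]
    have := ((isHomogeneous_C (Fin 3) (2:ℝ)).mul (isHomogeneous_X ℝ 0)).mul (isHomogeneous_X ℝ 2)
    simpa using this
  · rw [mem_homogeneousSubmodule]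
    have := (isHomogeneous_X ℝ (1 : Fin 3)).pow 2
    simpa using this

lemma X0_pow_mul_B3_pow_isHomogeneous (p q : ℕ) :
    ((X 0 : R3) ^ p * B3 ^ q).IsHomogeneous (p + 2 * q) := by
  have := ((isHomogeneous_X ℝ (0 : Fin 3)).pow p).mul (B3_isHomogeneous.pow q)
  simpa [mul_comm] using this

end AuxKer

theorem kernel_adNstar_Und_dim3 (d : ℕ) (hd : 1 ≤ d) :
    (∀ u ∈ Und 3 d, (adL N3ᵀ u = 0 ↔
      ∃ θ : MvPolynomial (Fin 2) ℝ, u = radialL 3 (aeval ![X 0, B3] θ))) ∧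
    Module.finrank ℝ ↥(Und 3 d ⊓ LinearMap.ker (adL N3ᵀ)) = (d + 1) / 2 := by
  have aeval_eq : ∀ θ : R3,
      (aeval ![X 0, B3]) (∑ m ∈ θ.support.filter (fun m => m 1 = 0),
          (coeff m θ / 2 ^ (m 2)) •
            ((X 0 : MvPolynomial (Fin 2) ℝ) ^ (m 0 - m 2) * X 1 ^ (m 2)))
        = ∑ m ∈ θ.support.filter (fun m => m 1 = 0),
            (coeff m θ / 2 ^ (m 2)) • ((X 0 : R3) ^ (m 0 - m 2) * B3 ^ (m 2)) := by
    intro θ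
    rw [map_sum]
    apply Finset.sum_congr rfl
    intro m _
    rw [_root_.map_smul, _root_.map_mul, map_pow, map_pow, aeval_X, aeval_X]
    show (coeff m θ / 2 ^ (m 2)) • ((X 0 : R3) ^ (m 0 - m 2) * B3 ^ (m 2)) = _
    rfl
  have part1 : ∀ u ∈ Und 3 d, (adL N3ᵀ u = 0 ↔
      ∃ θ : MvPolynomial (Fin 2) ℝ, u = radialL 3 (aeval ![X 0, B3] θ)) := by
    intro u hu
    constructor
    · intro hker
      obtain ⟨θ, hθmem, rfl⟩ := Submodule.mem_map.mp hu
      have hD : DD θ = 0 := (adL_radial_eq_zero_iff θ).mp hker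
      refine ⟨∑ m ∈ θ.support.filter (fun m => m 1 = 0),
          (coeff m θ / 2 ^ (m 2)) •
            ((X 0 : MvPolynomial (Fin 2) ℝ) ^ (m 0 - m 2) * X 1 ^ (m 2)), ?_⟩
      rw [aeval_eq θ]
      exact congrArg (radialL 3) (recon hD)
    · rintro ⟨Θ, rfl⟩
      exact (adL_radial_eq_zero_iff _).mpr (DD_aeval Θ)
  refine ⟨part1, ?_⟩
  set K := (d - 1) / 2 + 1 with hK
  set f : Fin K → (Fin 3 → R3) :=
    fun k => radialL 3 ((X 0 : R3) ^ (d - 1 - 2 * (k:ℕ)) * B3 ^ (k:ℕ)) with hf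
  have hcoeffψ : ∀ (g : Fin K → ℝ) (k : Fin K),
      coeff (mn (d - 1 - (k:ℕ)) 0 (k:ℕ))
          (∑ j, g j • ((X 0 : R3) ^ (d - 1 - 2 * (j:ℕ)) * B3 ^ (j:ℕ))) = g k * 2 ^ (k:ℕ) := by
    intro g k
    have hk2 : 2 * (k:ℕ) ≤ d - 1 := by have := k.isLt; omega
    rw [MvPolynomial.coeff_sum]
    rw [Finset.sum_eq_single k]
    · rw [coeff_smul, coeff_X0_pow_mul_B3_pow, if_pos ⟨by omega, rfl⟩, smul_eq_mul]
    · intro j _ hjk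
      have hj2 : 2 * (j:ℕ) ≤ d - 1 := by have := j.isLt; omega
      rw [coeff_smul, coeff_X0_pow_mul_B3_pow, if_neg, smul_zero]
      rintro ⟨h1, h2⟩
      exact hjk (Fin.ext h2.symm)
    · intro hk
      exact absurd (Finset.mem_univ k) hk
  have hLI : LinearIndependent ℝ f := by
    rw [Fintype.linearIndependent_iff]
    intro g hg k
    have hψ : (∑ j, g j • ((X 0 : R3) ^ (d - 1 - 2 * (j:ℕ)) * B3 ^ (j:ℕ))) = 0 := by
      have h0 : X 0 * (∑ j, g j • ((X 0 : R3) ^ (d - 1 - 2 * (j:ℕ)) * B3 ^ (j:ℕ))) = 0 := by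
        have hc := congrFun hg 0
        simp only [Pi.zero_apply] at hc
        rw [← hc, Finset.sum_apply, Finset.mul_sum]
        apply Finset.sum_congr rfl
        intro j _
        show X 0 * (g j • ((X 0 : R3) ^ (d - 1 - 2 * (j:ℕ)) * B3 ^ (j:ℕ)))
            = g j • (X 0 * ((X 0 : R3) ^ (d - 1 - 2 * (j:ℕ)) * B3 ^ (j:ℕ)))
        rw [mul_smul_comm]
      rcases mul_eq_zero.mp h0 with h1 | h1
      · exact absurd h1 (MvPolynomial.X_ne_zero 0)
      · exact h1
    have := hcoeffψ g k
    rw [hψ, coeff_zero] at this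
    have h2 : (2:ℝ) ^ (k:ℕ) ≠ 0 := by positivity
    exact (mul_eq_zero.mp this.symm).resolve_right h2
  have hspan : Und 3 d ⊓ LinearMap.ker (adL N3ᵀ) = Submodule.span ℝ (Set.range f) := by
    apply le_antisymm
    · intro u hu
      obtain ⟨hu1, hu2⟩ := Submodule.mem_inf.mp hu
      obtain ⟨θ, hθmem, rfl⟩ := Submodule.mem_map.mp hu1
      have hD : DD θ = 0 := (adL_radial_eq_zero_iff θ).mp (LinearMap.mem_ker.mp hu2)
      rw [show radialL 3 θ = radialL 3 (∑ m ∈ θ.support.filter (fun m => m 1 = 0),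
          (coeff m θ / 2 ^ (m 2)) • ((X 0 : R3) ^ (m 0 - m 2) * B3 ^ (m 2)))
        from congrArg (radialL 3) (recon hD), map_sum]
      apply Submodule.sum_mem
      intro m hm
      rw [LinearMap.map_smul]
      apply Submodule.smul_mem
      apply Submodule.subset_span
      rw [Finset.mem_filter, MvPolynomial.mem_support_iff] at hm
      obtain ⟨hm0, hm1⟩ := hm
      have hdeg : m 0 + m 1 + m 2 = d - 1 := mem_support_homog hθmem hm0
      have hle : m 2 ≤ m 0 := by
        by_contra hlt
        apply hm0
        rw [eq_mn m]
        exact zdeg hD _ _ _ (by omega)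
      refine ⟨⟨m 2, by omega⟩, ?_⟩
      show radialL 3 ((X 0 : R3) ^ (d - 1 - 2 * (m 2)) * B3 ^ (m 2)) = _
      rw [show d - 1 - 2 * (m 2) = m 0 - m 2 by omega]
    · rw [Submodule.span_le]
      rintro _ ⟨k, rfl⟩
      have hk2 : 2 * (k:ℕ) ≤ d - 1 := by have := k.isLt; omega
      rw [SetLike.mem_coe]
      apply Submodule.mem_inf.mpr
      constructor
      · apply Submodule.mem_map.mpr
        refine ⟨(X 0 : R3) ^ (d - 1 - 2 * (k:ℕ)) * B3 ^ (k:ℕ), ?_, rfl⟩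
        have hhom := X0_pow_mul_B3_pow_isHomogeneous (d - 1 - 2 * (k:ℕ)) (k:ℕ)
        rw [show (d - 1 - 2 * (k:ℕ)) + 2 * (k:ℕ) = d - 1 by omega] at hhom
        exact hhom
      · rw [LinearMap.mem_ker]
        exact (adL_radial_eq_zero_iff _).mpr (DD_X0_pow_mul_B3_pow _ _)
  rw [hspan, finrank_span_eq_card hLI, Fintype.card_fin]
  omega
end
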